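/- Let t_n be the words defined by t₀ = (N+1)NN and t_{n+1} = t_n⁺ φ₁(t_n⁺) (with φ₁ the blockwise involution swapping (N+1)N(N+1) ↔ NNN and (N+1)NN ↔ NN(N+1), and ⁺ meaning increment of the last letter). Then for each n ≥ 0, the periodic sequence t_n^∞ satisfies σ^i(t_n^∞) ≼ t_n^∞ for all i ≥ 0, where σ is the left shift and ≼ is the lexicographic order on infinite sequences. -/

import Mathlib

/-- Flip a letter between N and N+1. -/
def flipLetter (N x : ℕ) : ℕ := if x = N then N + 1 else N

/-- The blockwise involution φ₁ swapping (N+1)N(N+1) ↔ NNN and (N+1)NN ↔ NN(N+1). -/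
def phi1 (N : ℕ) : List ℕ → List ℕ
  | a :: b :: c :: rest => flipLetter N a :: b :: flipLetter N c :: phi1 N rest
  | l => l

/-- Increase the last letter of a word by 1. -/
def plusWord : List ℕ → List ℕ
  | [] => []
  | [a] => [a + 1]
  | a :: b :: rest => a :: plusWord (b :: rest)

/-- The words t_n: t₀ = (N+1)NN, t_{n+1} = t_n⁺ φ₁(t_n⁺). -/
def tword (N : ℕ) : ℕ → List ℕ
  | 0 => [N + 1, N, N]
  | n + 1 => plusWord (tword N n) ++ phi1 N (plusWord (tword N n))

/-- Lexicographic order ≼ on infinite sequences of naturals. -/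
def seqLe (u v : ℕ → ℕ) : Prop :=
  u = v ∨ ∃ n, (∀ m < n, u m = v m) ∧ u n < v n

/- ## Letters -/
inductive Ltr | A | B | C | D
deriving DecidableEq

instance : Fintype Ltr := ⟨{Ltr.A, Ltr.B, Ltr.C, Ltr.D}, fun x => by cases x <;> decide⟩

open Ltr

def rank : Ltr → ℕ | C => 0 | B => 1 | D => 2 | A => 3
def fstT : Ltr → Ltr | A => A | B => C | C => C | D => A
def sndT : Ltr → Ltr | A => B | B => A | C => D | D => C
def phiL : Ltr → Ltr | A => C | B => D | C => A | D => B
def plusL : Ltr → Ltr | C => B | D => A | x => x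
def fb : Ltr → Bool | A => true | D => true | _ => false
def tb : Ltr → Bool | A => true | B => true | _ => false

def bitOf (N : ℕ) (a : Ltr) (r : ℕ) : ℕ :=
  if r = 0 then (if fb a then N + 1 else N)
  else if r = 2 then (if tb a then N + 1 else N) else N

def expand2 : List Ltr → List Ltr
  | [] => []
  | a :: l => fstT a :: sndT a :: expand2 l

def encode3 (N : ℕ) : List Ltr → List ℕ
  | [] => []
  | a :: l => (if fb a then N + 1 else N) :: N :: (if tb a then N + 1 else N) :: encode3 N l

def pll : List Ltr → List Ltr
  | [] => []
  | [a] => [plusL a]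
  | a :: b :: l => a :: pll (b :: l)

def uL : ℕ → List Ltr
  | 0 => [D]
  | n + 1 => expand2 (uL n)

/- ## list lemmas -/
lemma expand2_append (l₁ l₂ : List Ltr) : expand2 (l₁ ++ l₂) = expand2 l₁ ++ expand2 l₂ := by
  induction l₁ with
  | nil => simp [expand2]
  | cons a l ih => simp [expand2, ih]

lemma encode3_append (N : ℕ) (l₁ l₂ : List Ltr) :
    encode3 N (l₁ ++ l₂) = encode3 N l₁ ++ encode3 N l₂ := by
  induction l₁ with
  | nil => simp [encode3]
  | cons a l ih => simp [encode3, ih]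

lemma pll_append_singleton (l : List Ltr) (a : Ltr) : pll (l ++ [a]) = l ++ [plusL a] := by
  induction l with
  | nil => simp [pll]
  | cons x xs ih =>
    cases xs with
    | nil => simp [pll]
    | cons y ys => simpa [pll] using ih

lemma plusWord_append_singleton (l : List ℕ) (x : ℕ) : plusWord (l ++ [x]) = l ++ [x + 1] := by
  induction l with
  | nil => simp [plusWord]
  | cons a as ih =>
    cases as with
    | nil => simp [plusWord]
    | cons y ys => simpa [plusWord] using ih

lemma pll_expand2 : ∀ l : List Ltr, pll (expand2 l) = expand2 (pll l) := by
  intro l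
  induction l with
  | nil => rfl
  | cons a as ih =>
    cases as with
    | nil => cases a <;> rfl
    | cons b bs =>
      show pll (fstT a :: sndT a :: expand2 (b :: bs)) = _
      have h1 : pll (fstT a :: sndT a :: expand2 (b :: bs))
          = fstT a :: pll (sndT a :: expand2 (b :: bs)) := by
        simp [pll, expand2]
      have h2 : pll (sndT a :: expand2 (b :: bs)) = sndT a :: pll (expand2 (b :: bs)) := by
        simp [pll, expand2]
      rw [h1, h2, ih]
      show _ = expand2 (a :: pll (b :: bs))
      simp [expand2]

lemma map_phiL_expand2 : ∀ l : List Ltr, expand2 (l.map phiL) = (expand2 l).map phiL := by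
  intro l
  induction l with
  | nil => rfl
  | cons a as ih =>
    simp only [List.map, expand2, ih]
    cases a <;> rfl

lemma length_uL (n : ℕ) : (uL n).length = 2 ^ n := by
  induction n with
  | zero => rfl
  | succ n ih =>
    have : ∀ l : List Ltr, (expand2 l).length = 2 * l.length := by
      intro l; induction l with
      | nil => rfl
      | cons a as ih2 => simp [expand2, ih2]; omega
    show (expand2 (uL n)).length = 2 ^ (n+1)
    rw [this, ih]; ring

lemma lastCD (n : ℕ) : ∃ l x, uL n = l ++ [x] ∧ (x = C ∨ x = D) := by
  induction n with
  | zero => exact ⟨[], D, rfl, Or.inr rfl⟩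
  | succ n ih =>
    obtain ⟨l, x, hu, hx⟩ := ih
    refine ⟨expand2 l ++ [fstT x], sndT x, ?_, ?_⟩
    · show expand2 (uL n) = _
      rw [hu, expand2_append]
      simp [expand2]
    · rcases hx with h | h <;> subst h <;> simp [sndT]

lemma struct (n : ℕ) : uL (n + 1) = pll (uL n) ++ (pll (uL n)).map phiL := by
  induction n with
  | zero => rfl
  | succ n ih =>
    show expand2 (uL (n+1)) = pll (uL (n+1)) ++ (pll (uL (n+1))).map phiL
    have h1 : pll (uL (n+1)) = expand2 (pll (uL n)) := by
      show pll (expand2 (uL n)) = _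
      rw [pll_expand2]
    rw [h1, ← map_phiL_expand2, ← expand2_append, ← ih]

lemma tword_encode (N n : ℕ) : tword N n = encode3 N (uL n) := by
  induction n with
  | zero => simp [tword, uL, encode3, fb, tb]
  | succ n ih =>
    obtain ⟨l, x, hu, hx⟩ := lastCD n
    have hplus : plusWord (encode3 N (uL n)) = encode3 N (pll (uL n)) := by
      rw [hu, pll_append_singleton, encode3_append, encode3_append]
      rcases hx with h | h <;> subst h <;>
        simp [encode3, plusL, fb, tb] <;>
        rw [show ∀ (l : List ℕ) a b c, l ++ [a, b, c] = (l ++ [a, b]) ++ [c] by intros; simp] <;>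
        rw [plusWord_append_singleton] <;> simp
    have hphi : ∀ w : List Ltr, phi1 N (encode3 N w) = encode3 N (w.map phiL) := by
      intro w
      induction w with
      | nil => rfl
      | cons a as ih2 =>
        show phi1 N (_ :: _ :: _ :: encode3 N as) = _
        rw [phi1]
        cases a <;> simp [encode3, ih2, flipLetter, fb, tb, phiL]
    show tword N (n+1) = _
    rw [tword, ih, hplus, hphi, struct n, encode3_append]

/- ## getD lemmas -/
lemma getD_expand2 : ∀ (l : List Ltr) (p : ℕ), p < 2 * l.length →
    (expand2 l).getD p C = (if p % 2 = 0 then fstT else sndT) (l.getD (p / 2) C) := by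
  intro l
  induction l with
  | nil => intro p hp; simp at hp
  | cons a as ih =>
    intro p hp
    match p with
    | 0 => simp [expand2]
    | 1 => simp [expand2]
    | (q + 2) =>
      show (expand2 as).getD q C = _
      rw [ih q (by simp at hp ⊢; omega)]
      have h1 : (q + 2) % 2 = q % 2 := by omega
      have h2 : (q + 2) / 2 = q / 2 + 1 := by omega
      rw [h1, h2]
      simp

lemma getD_encode3 (N : ℕ) : ∀ (l : List Ltr) (p : ℕ), p < 3 * l.length →
    (encode3 N l).getD p 0 = bitOf N (l.getD (p / 3) C) (p % 3) := by
  intro l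
  induction l with
  | nil => intro p hp; simp at hp
  | cons a as ih =>
    intro p hp
    match p with
    | 0 => simp [encode3, bitOf]
    | 1 => simp [encode3, bitOf]
    | 2 => simp [encode3, bitOf]
    | (q + 3) =>
      show (encode3 N as).getD q 0 = _
      rw [ih q (by simp at hp ⊢; omega)]
      have h1 : (q + 3) % 3 = q % 3 := by omega
      have h2 : (q + 3) / 3 = q / 3 + 1 := by omega
      rw [h1, h2]
      simp

/- ## the functional sequence -/
def Vf : ℕ → ℕ → Ltr
  | 0, _ => D
  | n + 1, m => (if m % 2 = 0 then fstT else sndT) (Vf n (m / 2))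

lemma Vf_even (n b : ℕ) : Vf (n + 1) (2 * b) = fstT (Vf n b) := by
  show (if (2 * b) % 2 = 0 then fstT else sndT) (Vf n (2 * b / 2)) = _
  rw [if_pos (by omega), Nat.mul_div_cancel_left b (by norm_num)]

lemma Vf_odd (n b : ℕ) : Vf (n + 1) (2 * b + 1) = sndT (Vf n b) := by
  show (if (2 * b + 1) % 2 = 0 then fstT else sndT) (Vf n ((2 * b + 1) / 2)) = _
  rw [if_neg (by omega), show (2 * b + 1) / 2 = b by omega]

lemma Vf_eq (n m : ℕ) : Vf n m = (uL n).getD (m % 2 ^ n) C := by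
  induction n generalizing m with
  | zero =>
    show D = ([D] : List Ltr).getD (m % 1) C
    rw [Nat.mod_one]
    rfl
  | succ n ih =>
    have hlen : (uL (n+1)).length = 2 ^ (n+1) := length_uL (n+1)
    have hp : m % 2 ^ (n+1) < 2 * (uL n).length := by
      rw [length_uL]
      have := Nat.mod_lt m (show 0 < 2 ^ (n+1) from Nat.pow_pos (by norm_num))
      rw [pow_succ] at this ⊢; omega
    show (if m % 2 = 0 then fstT else sndT) (Vf n (m / 2)) = (expand2 (uL n)).getD _ C
    rw [getD_expand2 (uL n) _ hp]
    have e1 : m % 2 ^ (n+1) % 2 = m % 2 := by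
      rw [Nat.mod_mod_of_dvd _ (by exact Dvd.intro_left _ (by rw [pow_succ]))]
    have e2 : m % 2 ^ (n+1) / 2 = m / 2 % 2 ^ n := by
      rw [pow_succ, mul_comm]
      exact Nat.mod_mul_right_div_self m 2 (2 ^ n)
    rw [e1, e2, ← ih]

/- ## basic facts about Vf -/
lemma Vf00 (n : ℕ) : Vf n 0 = A ∨ Vf n 0 = D := by
  induction n with
  | zero => exact Or.inr rfl
  | succ n ih =>
    have h0 : Vf (n + 1) 0 = fstT (Vf n 0) := by
      have := Vf_even n 0
      simpa using this
    rcases ih with h | h <;> rw [h0, h] <;> simp [fstT]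

lemma VfA (n : ℕ) : Vf (n + 1) 0 = A := by
  have h0 : Vf (n + 1) 0 = fstT (Vf n 0) := by simpa using Vf_even n 0
  rcases Vf00 n with h | h <;> rw [h0, h] <;> rfl

/-- Q property: a letter in {A,B} is always followed by one in {B,C}. -/
lemma Qp : ∀ n k, (Vf n k = A ∨ Vf n k = B) → (Vf n (k + 1) = B ∨ Vf n (k + 1) = C) := by
  intro n
  induction n with
  | zero => intro k h; simp [Vf] at h
  | succ n ih =>
    intro k h
    rcases Nat.even_or_odd k with ⟨b, hb⟩ | ⟨b, hb⟩
    · have hk : k = 2 * b := by omega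
      subst hk
      rw [Vf_even] at h
      have hk1 : 2 * b + 1 = 2 * b + 1 := rfl
      rw [Vf_odd]
      rcases hX : Vf n b with _ | _ | _ | _ <;> rw [hX] at h <;>
        simp [fstT, sndT] at h ⊢
    · have hk : k = 2 * b + 1 := by omega
      subst hk
      rw [Vf_odd] at h
      have hX : Vf n b = A ∨ Vf n b = B := by
        rcases hY : Vf n b with _ | _ | _ | _ <;> rw [hY] at h <;> simp [sndT] at h ⊢
      have hnext := ih b hX
      have e : 2 * b + 1 + 1 = 2 * (b + 1) := by ring
      rw [e, Vf_even]
      rcases hnext with h' | h' <;> rw [h'] <;> simp [fstT]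

/-- P1: letter-level lexicographic maximality of all shifts. -/
lemma P1 : ∀ n a, (∀ k, Vf n (a + k) = Vf n k) ∨
    ∃ k, (∀ m < k, Vf n (a + m) = Vf n m) ∧ rank (Vf n (a + k)) < rank (Vf n k) := by
  intro n
  induction n with
  | zero => intro a; left; intro k; rfl
  | succ n ih =>
    intro a
    rcases Nat.even_or_odd a with ⟨b, hb⟩ | ⟨b, hb⟩
    · -- even shift
      have ha : a = 2 * b := by omega
      subst ha
      rcases ih b with hall | ⟨m, hpre, hlt⟩
      · left
        intro k
        rcases Nat.even_or_odd k with ⟨c, hc⟩ | ⟨c, hc⟩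
        · have hk : k = 2 * c := by omega
          subst hk
          rw [show 2 * b + 2 * c = 2 * (b + c) by ring, Vf_even, Vf_even, hall c]
        · have hk : k = 2 * c + 1 := by omega
          subst hk
          rw [show 2 * b + (2 * c + 1) = 2 * (b + c) + 1 by ring, Vf_odd, Vf_odd, hall c]
      · right
        have key1 : ∀ P Q : Ltr, rank P < rank Q → fstT P = fstT Q →
            rank (sndT P) < rank (sndT Q) := by decide
        have key2 : ∀ P Q : Ltr, rank P < rank Q → fstT P ≠ fstT Q →
            rank (fstT P) < rank (fstT Q) := by decide
        by_cases hf : fstT (Vf n (b + m)) = fstT (Vf n m)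
        · refine ⟨2 * m + 1, ?_, ?_⟩
          · intro j hj
            rcases Nat.even_or_odd j with ⟨c, hc⟩ | ⟨c, hc⟩
            · have hk : j = 2 * c := by omega
              subst hk
              rw [show 2 * b + 2 * c = 2 * (b + c) by ring, Vf_even, Vf_even]
              rcases Nat.lt_or_ge c m with h | h
              · rw [hpre c h]
              · have : c = m := by omega
                subst this
                rw [hf]
            · have hk : j = 2 * c + 1 := by omega
              subst hk
              have hcm : c < m := by omega
              rw [show 2 * b + (2 * c + 1) = 2 * (b + c) + 1 by ring, Vf_odd, Vf_odd,
                hpre c hcm]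
          · rw [show 2 * b + (2 * m + 1) = 2 * (b + m) + 1 by ring, Vf_odd, Vf_odd]
            exact key1 _ _ hlt hf
        · refine ⟨2 * m, ?_, ?_⟩
          · intro j hj
            rcases Nat.even_or_odd j with ⟨c, hc⟩ | ⟨c, hc⟩
            · have hk : j = 2 * c := by omega
              subst hk
              have hcm : c < m := by omega
              rw [show 2 * b + 2 * c = 2 * (b + c) by ring, Vf_even, Vf_even, hpre c hcm]
            · have hk : j = 2 * c + 1 := by omega
              subst hk
              have hcm : c < m := by omega
              rw [show 2 * b + (2 * c + 1) = 2 * (b + c) + 1 by ring, Vf_odd, Vf_odd,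
                hpre c hcm]
          · rw [show 2 * b + 2 * m = 2 * (b + m) by ring, Vf_even, Vf_even]
            exact key2 _ _ hlt hf
    · -- odd shift
      have ha : a = 2 * b + 1 := by omega
      subst ha
      have hA : Vf (n + 1) 0 = A := VfA n
      right
      rcases hX : Vf n b with _ | _ | _ | _
      · -- X = A
        refine ⟨0, by omega, ?_⟩
        rw [show 2 * b + 1 + 0 = 2 * b + 1 by ring, Vf_odd, hX, hA]
        simp [sndT, rank]
      · -- X = B
        rcases n with _ | n'
        · rw [show Vf 0 b = D from rfl] at hX; exact absurd hX (by simp)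
        · have h1 : Vf (n' + 1) 0 = A := VfA n'
          refine ⟨1, ?_, ?_⟩
          · intro m hm
            have : m = 0 := by omega
            subst this
            rw [show 2 * b + 1 + 0 = 2 * b + 1 by ring, Vf_odd, hX, hA]
            rfl
          · have hnext := Qp (n' + 1) b (Or.inr hX)
            rw [show 2 * b + 1 + 1 = 2 * (b + 1) by ring, Vf_even,
              show (1 : ℕ) = 2 * 0 + 1 by ring, Vf_odd, h1]
            rcases hnext with h' | h' <;> rw [h'] <;> simp [fstT, sndT, rank]
      · -- X = C
        refine ⟨0, by omega, ?_⟩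
        rw [show 2 * b + 1 + 0 = 2 * b + 1 by ring, Vf_odd, hX, hA]
        simp [sndT, rank]
      · -- X = D
        refine ⟨0, by omega, ?_⟩
        rw [show 2 * b + 1 + 0 = 2 * b + 1 by ring, Vf_odd, hX, hA]
        simp [sndT, rank]

/- ## bit-level main lemma -/
lemma fb_Vf0 (n : ℕ) : fb (Vf n 0) = true := by
  rcases Vf00 n with h | h <;> rw [h] <;> rfl

theorem mainVf (N n : ℕ) : ∀ i,
    seqLe (fun j => bitOf N (Vf n ((i + j) / 3)) ((i + j) % 3))
          (fun j => bitOf N (Vf n (j / 3)) (j % 3)) := by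
  intro i
  set a := i / 3 with ha
  have hi : i = 3 * a + i % 3 ∧ i % 3 < 3 := by omega
  rcases (by omega : i % 3 = 0 ∨ i % 3 = 1 ∨ i % 3 = 2) with hr | hr | hr
  · -- r = 0
    rcases P1 n a with hall | ⟨m, hpre, hlt⟩
    · left
      funext j
      have e1 : (i + j) / 3 = a + j / 3 := by omega
      have e2 : (i + j) % 3 = j % 3 := by omega
      simp only [e1, e2, hall (j / 3)]
    · right
      by_cases hf : fb (Vf n (a + m)) = fb (Vf n m)
      · have key : ∀ P Q : Ltr, rank P < rank Q → fb P = fb Q →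
            tb P = false ∧ tb Q = true := by decide
        obtain ⟨ktb1, ktb2⟩ := key _ _ hlt hf
        refine ⟨3 * m + 2, ?_, ?_⟩
        · intro j hj
          have e1 : (i + j) / 3 = a + j / 3 := by omega
          have e2 : (i + j) % 3 = j % 3 := by omega
          simp only [e1, e2]
          rcases Nat.lt_or_ge (j / 3) m with h | h
          · rw [hpre _ h]
          · have hc : j / 3 = m ∧ j % 3 < 2 := by omega
            obtain ⟨hc1, hc2⟩ := hc
            rw [hc1]
            rcases (by omega : j % 3 = 0 ∨ j % 3 = 1) with h' | h' <;>
              simp [h', bitOf, hf]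
        · have e1 : (i + (3 * m + 2)) / 3 = a + m := by omega
          have e2 : (i + (3 * m + 2)) % 3 = 2 := by omega
          have e3 : (3 * m + 2) / 3 = m := by omega
          have e4 : (3 * m + 2) % 3 = 2 := by omega
          simp only [e1, e2, e3, e4, bitOf, ktb1, ktb2]
          simp
      · have key : ∀ P Q : Ltr, rank P < rank Q → fb P ≠ fb Q →
            fb P = false ∧ fb Q = true := by decide
        obtain ⟨kfb1, kfb2⟩ := key _ _ hlt hf
        refine ⟨3 * m, ?_, ?_⟩
        · intro j hj
          have e1 : (i + j) / 3 = a + j / 3 := by omega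
          have e2 : (i + j) % 3 = j % 3 := by omega
          have h : j / 3 < m := by omega
          simp only [e1, e2, hpre _ h]
        · have e1 : (i + 3 * m) / 3 = a + m := by omega
          have e2 : (i + 3 * m) % 3 = 0 := by omega
          have e3 : (3 * m) / 3 = m := by omega
          have e4 : (3 * m) % 3 = 0 := by omega
          simp only [e1, e2, e3, e4, bitOf, kfb1, kfb2]
          simp
  · -- r = 1
    right
    refine ⟨0, by omega, ?_⟩
    have e1 : (i + 0) % 3 = 1 := by omega
    have e2 : (0 : ℕ) / 3 = 0 := by omega
    have e3 : (0 : ℕ) % 3 = 0 := by omega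
    simp only [e1, e2, e3, bitOf, fb_Vf0 n]
    simp
  · -- r = 2
    by_cases hAB : Vf n a = A ∨ Vf n a = B
    · -- need n ≥ 1
      rcases n with _ | n'
      · simp [Vf] at hAB
      · have hA : Vf (n' + 1) 0 = A := VfA n'
        have hnext := Qp (n' + 1) a hAB
        have hfb : fb (Vf (n' + 1) (a + 1)) = false := by
          rcases hnext with h | h <;> rw [h] <;> rfl
        right
        refine ⟨2, ?_, ?_⟩
        · intro m hm
          rcases (by omega : m = 0 ∨ m = 1) with h | h <;> subst h
          · have e1 : (i + 0) / 3 = a := by omega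
            have e2 : (i + 0) % 3 = 2 := by omega
            simp only [e1, e2, bitOf, hA]
            rcases hAB with h | h <;> rw [h] <;> rfl
          · have e1 : (i + 1) / 3 = a + 1 := by omega
            have e2 : (i + 1) % 3 = 0 := by omega
            simp only [e1, e2, bitOf, hfb]
            rfl
        · have e1 : (i + 2) / 3 = a + 1 := by omega
          have e2 : (i + 2) % 3 = 1 := by omega
          simp only [e1, e2, bitOf, hA]
          simp [tb]
    · right
      refine ⟨0, by omega, ?_⟩
      have e1 : (i + 0) / 3 = a := by omega
      have e2 : (i + 0) % 3 = 2 := by omega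
      have htb : tb (Vf n a) = false := by
        rcases h : Vf n a with _ | _ | _ | _ <;> simp [h, tb] at hAB ⊢
      simp only [e1, e2, bitOf, htb, fb_Vf0 n]
      simp

/- ## glue -/
lemma length_encode3 (N : ℕ) : ∀ l : List Ltr, (encode3 N l).length = 3 * l.length := by
  intro l
  induction l with
  | nil => rfl
  | cons a as ih => simp [encode3, ih]; omega

lemma tword_length (N n : ℕ) : (tword N n).length = 3 * 2 ^ n := by
  rw [tword_encode, length_encode3, length_uL]

lemma tword_getD (N n m : ℕ) :
    (tword N n).getD (m % (tword N n).length) 0 = bitOf N (Vf n (m / 3)) (m % 3) := by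
  rw [tword_length, tword_encode]
  have hpos : 0 < 3 * 2 ^ n := by positivity
  have hp : m % (3 * 2 ^ n) < 3 * (uL n).length := by
    rw [length_uL]; exact Nat.mod_lt m hpos
  rw [getD_encode3 N (uL n) _ hp]
  have e1 : m % (3 * 2 ^ n) / 3 = m / 3 % 2 ^ n := Nat.mod_mul_right_div_self m 3 (2 ^ n)
  have e2 : m % (3 * 2 ^ n) % 3 = m % 3 := Nat.mod_mod_of_dvd m ⟨2 ^ n, rfl⟩
  rw [e1, e2, ← Vf_eq]


/-- σ^i(t_n^∞) ≼ t_n^∞ for all i ≥ 0. -/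
theorem shift_periodic_tword_le (N n : ℕ) :
    ∀ i : ℕ,
      seqLe (fun j => (tword N n).getD ((i + j) % (tword N n).length) 0)
            (fun j => (tword N n).getD (j % (tword N n).length) 0) := by
  intro i
  have h1 : (fun j => (tword N n).getD ((i + j) % (tword N n).length) 0)
      = fun j => bitOf N (Vf n ((i + j) / 3)) ((i + j) % 3) :=
    funext fun j => tword_getD N n (i + j)
  have h2 : (fun j => (tword N n).getD (j % (tword N n).length) 0)
      = fun j => bitOf N (Vf n (j / 3)) (j % 3) :=
    funext fun j => tword_getD N n j
  rw [h1, h2]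
  exact mainVf N n i
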